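/- The abelianization of the binary icosahedral group P_120 = ⟨A, B | AB^2A = BAB, BA^2B = ABA⟩ is the trivial group; equivalently, P_120 is a perfect group. -/

import Mathlib

/-- Relators for the binary icosahedral group
`P₁₂₀ = ⟨A, B | AB²A = BAB, BA²B = ABA⟩`, with generator `0 = A`, `1 = B`. -/
def p120Rels : Set (FreeGroup (Fin 2)) :=
  {FreeGroup.of 0 * FreeGroup.of 1 ^ 2 * FreeGroup.of 0 *
     (FreeGroup.of 1 * FreeGroup.of 0 * FreeGroup.of 1)⁻¹,
   FreeGroup.of 1 * FreeGroup.of 0 ^ 2 * FreeGroup.of 1 *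
     (FreeGroup.of 0 * FreeGroup.of 1 * FreeGroup.of 0)⁻¹}

/-- The binary icosahedral group `P₁₂₀`. -/
abbrev P120 := PresentedGroup p120Rels

namespace P120Aux

noncomputable def ψ : FreeGroup (Fin 2) →* Abelianization P120 :=
  Abelianization.of.comp (QuotientGroup.mk' (Subgroup.normalClosure p120Rels))

lemma rel_one {r : FreeGroup (Fin 2)} (hr : r ∈ p120Rels) : ψ r = 1 := by
  have h : QuotientGroup.mk' (Subgroup.normalClosure p120Rels) r = (1 : P120) :=
    (QuotientGroup.eq_one_iff r).mpr (Subgroup.subset_normalClosure hr)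
  show Abelianization.of (QuotientGroup.mk' (Subgroup.normalClosure p120Rels) r) = 1
  exact (congrArg (Abelianization.of (G := P120)) h).trans (map_one _)

lemma gen_one (i : Fin 2) : ψ (FreeGroup.of i) = 1 := by
  have h1 := rel_one (r := FreeGroup.of 0 * FreeGroup.of 1 ^ 2 * FreeGroup.of 0 *
     (FreeGroup.of 1 * FreeGroup.of 0 * FreeGroup.of 1)⁻¹) (Or.inl rfl)
  have h2 := rel_one (r := FreeGroup.of 1 * FreeGroup.of 0 ^ 2 * FreeGroup.of 1 *
     (FreeGroup.of 0 * FreeGroup.of 1 * FreeGroup.of 0)⁻¹) (Or.inr rfl)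
  simp only [map_mul, map_pow, map_inv, mul_inv_eq_one] at h1 h2
  set a := ψ (FreeGroup.of 0) with ha
  set b := ψ (FreeGroup.of 1) with hb
  have hA : a = 1 := by
    have h : a * b ^ 2 * a = a * b ^ 2 := by
      rw [h1, mul_comm b a, mul_assoc, ← sq]
    exact mul_eq_left.mp h
  have hB : b = 1 := by
    have h : b * a ^ 2 * b = b * a ^ 2 := by
      rw [h2, mul_comm a b, mul_assoc, ← sq]
    exact mul_eq_left.mp h
  fin_cases i <;> simpa using (by first | exact hA | exact hB : _)

lemma psi_eq_one : ψ = 1 := FreeGroup.ext_hom _ _ fun i => by simp [gen_one i]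

lemma ab_of_eq_one (x : P120) : Abelianization.of x = 1 := by
  obtain ⟨w, rfl⟩ := QuotientGroup.mk_surjective (s := Subgroup.normalClosure p120Rels) x
  have : ψ w = 1 := by rw [psi_eq_one]; rfl
  exact this

end P120Aux

/-- The abelianization of `P₁₂₀` is trivial; equivalently, `P₁₂₀` is perfect. -/
theorem abelianization_P120_trivial :
    (∀ g : Abelianization P120, g = 1) ∧ commutator P120 = ⊤ := by
  constructor
  · intro g
    obtain ⟨x, rfl⟩ := QuotientGroup.mk_surjective g
    exact P120Aux.ab_of_eq_one x
  · rw [Subgroup.eq_top_iff']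
    intro x
    exact (QuotientGroup.eq_one_iff x).mp (P120Aux.ab_of_eq_one x)
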